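/- Let n ≥ 2 and let w ∈ ℝ^{n−1} satisfy w_1 < w_2 < … < w_{n−1} < 0. For each k ∈ {1,…,n−1}, let c^k ∈ {0,1}^{n−1} be the vector with c^k_i = 1 for i ≤ k and c^k_i = 0 for i > k. Then w illuminates every element c^1, c^2, …, c^{n−1} of this maximal chain as boundary points of the unit ball B_H of ‖·‖_H; that is, for each k there exists ε > 0 with ‖c^k + λw‖_H < 1 for all 0 < λ < ε. -/

import Mathlib

/-- The variation seminorm `max_i x_i - min_i x_i` on `ℝⁿ` (a norm on `V0`). -/
noncomputable def vnorm (n : ℕ) (x : Fin n → ℝ) : ℝ := (⨆ i, x i) - (⨅ i, x i)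

/-- The norm `‖x‖_H = max(max_i x_i, 0) - min(min_i x_i, 0)` on `ℝᵐ`. -/
noncomputable def Hnorm (m : ℕ) (x : Fin m → ℝ) : ℝ :=
  max (⨆ i, x i) 0 - min (⨅ i, x i) 0

/-- Hilbert's (projective) metric on the open positive cone. -/
noncomputable def dH (n : ℕ) (x y : Fin n → ℝ) : ℝ :=
  Real.log (⨆ i, x i / y i) - Real.log (⨅ i, x i / y i)

/-- `V0 = {x ∈ ℝⁿ : x_n = 0}` (the last coordinate vanishes). -/
def V0 (n : ℕ) : Set (Fin n → ℝ) := {x | ∀ i : Fin n, (i : ℕ) = n - 1 → x i = 0}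

/-- `v` illuminates `z` (a point of the unit sphere of the norm `nrm`). -/
def illum (m : ℕ) (nrm : (Fin m → ℝ) → ℝ) (v z : Fin m → ℝ) : Prop :=
  ∃ ε > 0, ∀ l : ℝ, 0 < l → l < ε → nrm (z + l • v) < 1

/-- If `w_1 < w_2 < … < w_{n-1} < 0`, then `w` illuminates every element
`c^k` (ones in the first `k` coordinates) of the standard maximal chain. -/
theorem stmt12 (n : ℕ) (hn : 2 ≤ n) (w : Fin (n - 1) → ℝ)
    (hmono : StrictMono w) (hneg : ∀ i, w i < 0) :
    ∀ k : ℕ, 1 ≤ k → k ≤ n - 1 →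
      illum (n - 1) (Hnorm (n - 1)) w (fun i => if (i : ℕ) < k then 1 else 0) := by
  intro k hk1 hk2
  have hm : 0 < n - 1 := by omega
  haveI : Nonempty (Fin (n - 1)) := ⟨⟨0, hm⟩⟩
  have ha : k - 1 < n - 1 := by omega
  set a : Fin (n - 1) := ⟨k - 1, ha⟩ with ha_def
  have hw0 : (0 : ℝ) < -w ⟨0, hm⟩ := neg_pos.mpr (hneg _)
  refine ⟨1 / (-w ⟨0, hm⟩), div_pos one_pos hw0, ?_⟩
  intro l hl hle
  set x : Fin (n - 1) → ℝ := fun i => (if (i : ℕ) < k then (1:ℝ) else 0) + l * w i with hx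
  have hxi : ∀ i, x i = (if (i : ℕ) < k then 1 else 0) + l * w i := fun i => rfl
  have hgoal : ((fun i : Fin (n-1) => if (i : ℕ) < k then (1:ℝ) else 0) + l • w) = x := by
    funext i; simp [hx, Pi.add_apply, smul_eq_mul]
  rw [hgoal]
  have hpos : ∀ i, 0 < 1 + l * w i := by
    intro i
    have h0i : (⟨0, hm⟩ : Fin (n - 1)) ≤ i := by simp [Fin.le_def]
    have h1 : l * w ⟨0, hm⟩ ≤ l * w i :=
      mul_le_mul_of_nonneg_left (hmono.monotone h0i) hl.le
    have h2 : l * (-w ⟨0, hm⟩) < 1 := by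
      calc l * (-w ⟨0, hm⟩) < (1 / (-w ⟨0, hm⟩)) * (-w ⟨0, hm⟩) := by
            exact mul_lt_mul_of_pos_right hle hw0
        _ = 1 := by field_simp; exact div_self (hneg _).ne
    nlinarith
  have hbdd : BddAbove (Set.range x) := (Set.finite_range x).bddAbove
  have hbddb : BddBelow (Set.range x) := (Set.finite_range x).bddBelow
  have hsup : (⨆ i, x i) ≤ 1 + l * w a := by
    apply ciSup_le
    intro i
    rw [hxi]
    by_cases hik : (i : ℕ) < k
    · simp only [hik, if_pos]
      have : w i ≤ w a := hmono.monotone (by simp [Fin.le_def, ha_def]; omega)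
      nlinarith
    · simp only [hik, if_neg, not_false_iff]
      have : l * w i < 0 := mul_neg_of_pos_of_neg hl (hneg i)
      have := hpos a
      linarith
  have hmax : max (⨆ i, x i) 0 ≤ 1 + l * w a := max_le hsup (hpos a).le
  rcases lt_or_eq_of_le hk2 with hkm | hkm
  · -- k < n - 1
    set b : Fin (n - 1) := ⟨k, hkm⟩ with hb_def
    have hinf : l * w b ≤ ⨅ i, x i := by
      apply le_ciInf
      intro i
      rw [hxi]
      by_cases hik : (i : ℕ) < k
      · simp only [hik, if_pos]
        have h1 : l * w b < 0 := mul_neg_of_pos_of_neg hl (hneg b)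
        have := hpos i
        linarith
      · simp only [hik, if_neg, not_false_iff]
        have : w b ≤ w i := hmono.monotone (by simp [Fin.le_def, hb_def]; omega)
        nlinarith
    have hminb : l * w b ≤ min (⨅ i, x i) 0 :=
      le_min hinf (le_of_lt (mul_neg_of_pos_of_neg hl (hneg b)))
    have hab : w a < w b := hmono (by simp [Fin.lt_def, ha_def, hb_def]; omega)
    have hH : Hnorm (n - 1) x ≤ 1 + l * w a - l * w b := by
      unfold Hnorm; linarith
    nlinarith
  · -- k = n - 1 : all coordinates positive
    have hinf : (0 : ℝ) ≤ ⨅ i, x i := by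
      apply le_ciInf
      intro i
      rw [hxi]
      have hik : (i : ℕ) < k := by omega
      simp only [hik, if_pos]
      exact (hpos i).le
    have hmin : min (⨅ i, x i) 0 = 0 := min_eq_right hinf
    have hwa : l * w a < 0 := mul_neg_of_pos_of_neg hl (hneg a)
    unfold Hnorm
    rw [hmin]
    linarith
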